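/- arXiv:1301.6364 — 3 statements merged into one kernel-verified Lean document; each statement's English description precedes it below -/
import Mathlib

section
/- Let S ≥ 1, P ∈ {1,...,S}, and let σ ≥ 0 and ξ ≥ 0 be real numbers. Let u, v ∈ (ℝ⁺)^S be nondecreasingly sorted vectors such that u ≺_P v. Then G(u) ≺_P G̃^P(v), where G(u) = sort([u + σ·e₁ − ξ·1]⁺) and G̃^P(v) = sort([v + σ·e_P − ξ·1]⁺). -/
open Finset

/-- The nondecreasing rearrangement of a finite real vector. -/
noncomputable def sortVec {S : ℕ} (u : Fin S → ℝ) : Fin S → ℝ := u ∘ Tuple.sort u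

/-- The Schur-convex semi-ordering `≺_c` : equal total sums, and each tail sum
(from the second coordinate on) of the sorted version of `u` is dominated by that of `v`. -/
def schurLE {S : ℕ} (u v : Fin S → ℝ) : Prop :=
  (∑ i, u i = ∑ i, v i) ∧
  ∀ k : Fin S, 1 ≤ (k : ℕ) →
    ∑ i ∈ Finset.Ici k, sortVec u i ≤ ∑ i ∈ Finset.Ici k, sortVec v i

/-- The semi-ordering `≺_*` : every tail sum of `u` is dominated by that of `v`. -/
def starLE {S : ℕ} (u v : Fin S → ℝ) : Prop :=
  ∀ k : Fin S, ∑ i ∈ Finset.Ici k, u i ≤ ∑ i ∈ Finset.Ici k, v i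

/-- The semi-ordering `≺_P` : `u ≺_* v` and `u(ℓ) ≤ v(ℓ)` for every `ℓ ≥ P`. -/
def precP {S : ℕ} (P : Fin S) (u v : Fin S → ℝ) : Prop :=
  starLE u v ∧ ∀ ℓ : Fin S, P ≤ ℓ → u ℓ ≤ v ℓ

/-- The map `G̃^P : u ↦ sort([u + σ·e_P − ξ·1]⁺)`.  For `P` the first index,
this is the Kiefer–Wolfowitz map `G`. -/
noncomputable def GP {S : ℕ} (σ ξ : ℝ) (P : Fin S) (u : Fin S → ℝ) : Fin S → ℝ :=
  sortVec (fun i => max (u i + (if i = P then σ else 0) - ξ) 0)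

lemma monotone_sortVec {S : ℕ} (f : Fin S → ℝ) : Monotone (sortVec f) :=
  Tuple.monotone_sort f

lemma card_filter_sortVec {S : ℕ} (f : Fin S → ℝ) (t : ℝ) :
    #(univ.filter fun i => sortVec f i ≤ t) = #(univ.filter fun i => f i ≤ t) := by
  apply Finset.card_bij (fun i _ => Tuple.sort f i)
  · intro a ha
    simp only [mem_filter, mem_univ, true_and] at *
    exact ha
  · intro a _ b _ h
    exact (Tuple.sort f).injective h
  · intro b hb
    refine ⟨(Tuple.sort f).symm b, ?_, by simp⟩
    simp only [mem_filter, mem_univ, true_and] at *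
    show f (Tuple.sort f ((Tuple.sort f).symm b)) ≤ t
    rwa [Equiv.apply_symm_apply]

lemma mono_le_iff_card {S : ℕ} {g : Fin S → ℝ} (hg : Monotone g) (ℓ : Fin S) (t : ℝ) :
    g ℓ ≤ t ↔ (ℓ : ℕ) + 1 ≤ #(univ.filter fun i => g i ≤ t) := by
  constructor
  · intro h
    have hsub : Iic ℓ ⊆ univ.filter fun i => g i ≤ t := by
      intro i hi
      simp only [mem_filter, mem_univ, true_and]
      exact le_trans (hg (mem_Iic.mp hi)) h
    have := card_le_card hsub
    rwa [Fin.card_Iic] at this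
  · intro h
    by_contra hc
    push_neg at hc
    have hsub : (univ.filter fun i => g i ≤ t) ⊆ Iio ℓ := by
      intro i hi
      simp only [mem_filter, mem_univ, true_and] at hi
      rw [mem_Iio]
      by_contra hle
      push_neg at hle
      exact absurd (le_trans (hg hle) hi) (not_le.mpr hc)
    have := card_le_card hsub
    rw [Fin.card_Iio] at this
    omega

lemma sortVec_le_iff {S : ℕ} (f : Fin S → ℝ) (ℓ : Fin S) (t : ℝ) :
    sortVec f ℓ ≤ t ↔ (ℓ : ℕ) + 1 ≤ #(univ.filter fun i => f i ≤ t) := by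
  rw [← card_filter_sortVec f t]
  exact mono_le_iff_card (monotone_sortVec f) ℓ t

lemma sum_le_sum_upSet {S : ℕ} {g : Fin S → ℝ} (hg : Monotone g)
    (D : Finset (Fin S)) (hD : ∀ j ∉ D, ∀ i ∈ D, j ≤ i) :
    ∀ (n : ℕ) (C : Finset (Fin S)), #(C \ D) = n → #C = #D →
      ∑ i ∈ C, g i ≤ ∑ i ∈ D, g i := by
  intro n
  induction n with
  | zero =>
    intro C h0 hcard
    have hsub : C ⊆ D := by
      rwa [Finset.card_eq_zero, Finset.sdiff_eq_empty_iff_subset] at h0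
    rw [Finset.eq_of_subset_of_card_le hsub (le_of_eq hcard.symm)]
  | succ n ih =>
    intro C h0 hcard
    have hne : (C \ D).Nonempty := by rw [← Finset.card_pos, h0]; omega
    obtain ⟨c, hc⟩ := hne
    have hcC : c ∈ C := (Finset.mem_sdiff.mp hc).1
    have hcD : c ∉ D := (Finset.mem_sdiff.mp hc).2
    have hDC : (D \ C).Nonempty := by
      rw [← Finset.card_pos, Finset.card_sdiff_comm hcard.symm, h0]; omega
    obtain ⟨i, hi⟩ := hDC
    have hiD : i ∈ D := (Finset.mem_sdiff.mp hi).1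
    have hiC : i ∉ C := (Finset.mem_sdiff.mp hi).2
    have hgci : g c ≤ g i := hg (hD c hcD i hiD)
    have hinotmem : i ∉ C.erase c := fun h => hiC (Finset.mem_of_mem_erase h)
    have hsdiff : (insert i (C.erase c)) \ D = (C \ D).erase c := by
      ext x
      simp only [Finset.mem_sdiff, Finset.mem_insert, Finset.mem_erase]
      constructor
      · rintro ⟨hx1 | ⟨hxc, hxC⟩, hxD⟩
        · exact absurd (hx1 ▸ hiD) hxD
        · exact ⟨hxc, hxC, hxD⟩
      · rintro ⟨hxc, hxC, hxD⟩
        exact ⟨Or.inr ⟨hxc, hxC⟩, hxD⟩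
    have hstep : ∑ x ∈ C, g x ≤ ∑ x ∈ insert i (C.erase c), g x := by
      rw [Finset.sum_insert hinotmem, ← Finset.add_sum_erase C g hcC]
      exact add_le_add_left hgci _
    refine le_trans hstep (ih (insert i (C.erase c)) ?_ ?_)
    · rw [hsdiff, Finset.card_erase_of_mem hc, h0]; omega
    · rw [Finset.card_insert_of_notMem hinotmem, Finset.card_erase_of_mem hcC]
      have : 1 ≤ #C := Finset.card_pos.mpr ⟨c, hcC⟩
      omega

lemma tail_posPart_le {S : ℕ} {u v : Fin S → ℝ} (hu : Monotone u)
    (hstar : starLE u v) (ξ : ℝ) (k : Fin S) :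
    ∑ i ∈ Ici k, max (u i - ξ) 0 ≤ ∑ i ∈ Ici k, max (v i - ξ) 0 := by
  have hL : ∑ i ∈ Ici k, max (u i - ξ) 0
      = ∑ i ∈ (Ici k).filter (fun i => ξ ≤ u i), (u i - ξ) := by
    rw [Finset.sum_filter]
    apply Finset.sum_congr rfl
    intro i _
    rcases le_or_gt ξ (u i) with h | h
    · rw [if_pos h, max_eq_left (by linarith)]
    · rw [if_neg (not_le.mpr h), max_eq_right (by linarith)]
  rw [hL]
  set T := (Ici k).filter (fun i => ξ ≤ u i) with hT
  rcases T.eq_empty_or_nonempty with he | hne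
  · rw [he, Finset.sum_empty]
    exact Finset.sum_nonneg fun i _ => le_max_right _ _
  · set j := T.min' hne with hj
    have hjT : j ∈ T := T.min'_mem hne
    have hkj : k ≤ j := mem_Ici.mp (Finset.mem_of_mem_filter j hjT)
    have hξj : ξ ≤ u j := by
      have := hjT
      rw [hT, Finset.mem_filter] at this
      exact this.2
    have hTj : T = Ici j := by
      ext i
      constructor
      · intro hi
        exact mem_Ici.mpr (T.min'_le i hi)
      · intro hi
        rw [hT, Finset.mem_filter]
        have hji : j ≤ i := mem_Ici.mp hi
        exact ⟨mem_Ici.mpr (le_trans hkj hji), le_trans hξj (hu hji)⟩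
    rw [hTj]
    calc ∑ i ∈ Ici j, (u i - ξ) ≤ ∑ i ∈ Ici j, (v i - ξ) := by
          rw [Finset.sum_sub_distrib, Finset.sum_sub_distrib]
          exact sub_le_sub_right (hstar j) _
      _ ≤ ∑ i ∈ Ici j, max (v i - ξ) 0 :=
          Finset.sum_le_sum fun i _ => le_max_left _ _
      _ ≤ ∑ i ∈ Ici k, max (v i - ξ) 0 := by
          apply Finset.sum_le_sum_of_subset_of_nonneg (Finset.Ici_subset_Ici.mpr hkj)
          intro i _ _
          exact le_max_right _ _

lemma posPart_increment {s t σ ξ : ℝ} (hst : s ≤ t) (hσ : 0 ≤ σ) :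
    max (s + σ - ξ) 0 ≤ max (s - ξ) 0 + (max (t + σ - ξ) 0 - max (t - ξ) 0) := by
  simp only [max_def]
  split_ifs <;> linarith

lemma sum_le_tail_sortVec {S : ℕ} (f : Fin S → ℝ) (k : Fin S) (B : Finset (Fin S))
    (hB : #B = #(Ici k)) :
    ∑ i ∈ B, f i ≤ ∑ i ∈ Ici k, sortVec f i := by
  have h1 : ∑ i ∈ B, f i = ∑ i ∈ B.image (Tuple.sort f).symm, sortVec f i := by
    rw [Finset.sum_image (fun x _ y _ h => (Tuple.sort f).symm.injective h)]
    apply Finset.sum_congr rfl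
    intro i _
    show f i = f (Tuple.sort f ((Tuple.sort f).symm i))
    rw [Equiv.apply_symm_apply]
  rw [h1]
  apply sum_le_sum_upSet (monotone_sortVec f) (Ici k) ?_ _ _ rfl ?_
  · intro j hj i hi
    exact le_of_lt (lt_of_lt_of_le (not_le.mp (fun h => hj (mem_Ici.mpr h))) (mem_Ici.mp hi))
  · rw [Finset.card_image_of_injective _ (Equiv.injective _), hB]

lemma tail_sortVec_eq {S : ℕ} (f : Fin S → ℝ) (k : Fin S) :
    ∑ i ∈ Ici k, sortVec f i = ∑ i ∈ (Ici k).image (Tuple.sort f), f i := by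
  rw [Finset.sum_image (fun x _ y _ h => (Tuple.sort f).injective h)]
  rfl

lemma aux_main {S : ℕ} (z P : Fin S) (hzb : ∀ i : Fin S, z ≤ i) (σ ξ : ℝ) (hσ : 0 ≤ σ)
    (u v : Fin S → ℝ) (hu : Monotone u) (hv : Monotone v) (hstar : starLE u v)
    (hpt : ∀ ℓ : Fin S, P ≤ ℓ → u ℓ ≤ v ℓ) :
    (∀ k : Fin S,
      ∑ i ∈ Ici k, sortVec (fun i => max (u i + (if i = z then σ else 0) - ξ) 0) i
        ≤ ∑ i ∈ Ici k, sortVec (fun i => max (v i + (if i = P then σ else 0) - ξ) 0) i) ∧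
    (∀ ℓ : Fin S, P ≤ ℓ →
      sortVec (fun i => max (u i + (if i = z then σ else 0) - ξ) 0) ℓ
        ≤ sortVec (fun i => max (v i + (if i = P then σ else 0) - ξ) 0) ℓ) := by
  set fu : Fin S → ℝ := fun i => max (u i + (if i = z then σ else 0) - ξ) 0 with hfu
  set fv : Fin S → ℝ := fun i => max (v i + (if i = P then σ else 0) - ξ) 0 with hfv
  set a : Fin S → ℝ := fun i => max (u i - ξ) 0 with ha
  set c : Fin S → ℝ := fun i => max (v i - ξ) 0 with hc
  have hza : ∀ i, i ≠ z → fu i = a i := by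
    intro i hi; simp only [hfu, ha, if_neg hi, add_zero]
  have hfuz : fu z = max (u z + σ - ξ) 0 := by simp only [hfu, if_pos rfl]; simp
  have hfvP : fv P = max (v P + σ - ξ) 0 := by simp only [hfv, if_pos rfl]; simp
  have hfvne : ∀ i, i ≠ P → fv i = c i := by
    intro i hi; simp only [hfv, hc, if_neg hi, add_zero]
  have hamono : Monotone a := fun i j hij =>
    max_le_max (by have := hu hij; linarith) le_rfl
  have hcmono : Monotone c := fun i j hij =>
    max_le_max (by have := hv hij; linarith) le_rfl
  have hac : ∀ i, P ≤ i → a i ≤ c i := fun i hi =>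
    max_le_max (by have := hpt i hi; linarith) le_rfl
  have hcfv : ∀ i, c i ≤ fv i := by
    intro i
    apply max_le_max _ le_rfl
    have h0 : (0:ℝ) ≤ if i = P then σ else 0 := by split <;> simp [hσ]
    linarith
  have huzvP : u z ≤ v P := le_trans (hu (hzb P)) (hpt P le_rfl)
  have hbd : fu z ≤ fv P := by
    rw [hfuz, hfvP]
    exact max_le_max (by linarith) le_rfl
  constructor
  · -- starLE part
    intro k
    rw [tail_sortVec_eq]
    set A := (Ici k).image (Tuple.sort fu) with hA
    have hAcard : #A = #(Ici k) :=
      Finset.card_image_of_injective _ (Equiv.injective _)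
    have hD_Ici : ∀ j ∉ Ici k, ∀ i ∈ Ici k, j ≤ i := fun j hj i hi =>
      le_of_lt (lt_of_lt_of_le (not_le.mp fun h => hj (mem_Ici.mpr h)) (mem_Ici.mp hi))
    have hN := tail_posPart_le hu hstar ξ k
    have hB1 := sum_le_tail_sortVec fv k (Ici k) rfl
    have h5 : ∑ i ∈ Ici k, c i ≤ ∑ i ∈ Ici k, fv i :=
      Finset.sum_le_sum fun i _ => hcfv i
    by_cases h0 : z ∈ A
    · have hsplit : ∑ i ∈ A, fu i = fu z + ∑ i ∈ A.erase z, a i := by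
        rw [← Finset.add_sum_erase A fu h0]
        congr 1
        exact Finset.sum_congr rfl fun i hi => hza i (Finset.ne_of_mem_erase hi)
      rw [hsplit]
      by_cases hkP : k ≤ P
      · -- P ∈ Ici k
        have h1 : fu z ≤ a z + (fv P - c P) := by
          rw [hfuz, ha, hfvP, hc]
          exact posPart_increment huzvP hσ
        have h2 : ∑ i ∈ A.erase z, a i + a z = ∑ i ∈ A, a i :=
          Finset.sum_erase_add A a h0
        have h3 : ∑ i ∈ A, a i ≤ ∑ i ∈ Ici k, a i :=
          sum_le_sum_upSet hamono (Ici k) hD_Ici _ A rfl hAcard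
        have hPm : P ∈ Ici k := mem_Ici.mpr hkP
        have h6 : ∑ i ∈ Ici k, c i + (fv P - c P) = ∑ i ∈ Ici k, fv i := by
          rw [← Finset.add_sum_erase _ c hPm, ← Finset.add_sum_erase _ fv hPm]
          have he : ∑ i ∈ (Ici k).erase P, c i = ∑ i ∈ (Ici k).erase P, fv i :=
            Finset.sum_congr rfl fun i hi => (hfvne i (Finset.ne_of_mem_erase hi)).symm
          rw [he]; ring
        linarith
      · -- P < k
        push_neg at hkP
        have hPIoi : P ∉ Ioi k := by
          rw [mem_Ioi]; exact not_lt.mpr (le_of_lt hkP)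
        have hD_Ioi : ∀ j ∉ Ioi k, ∀ i ∈ Ioi k, j ≤ i := fun j hj i hi =>
          le_trans (not_lt.mp fun h => hj (mem_Ioi.mpr h)) (le_of_lt (mem_Ioi.mp hi))
        have hkS : (k:ℕ) < S := k.isLt
        have hcardA' : #(A.erase z) = #(Ioi k) := by
          rw [Finset.card_erase_of_mem h0, hAcard, Fin.card_Ici, Fin.card_Ioi]
          omega
        have h3 : ∑ i ∈ A.erase z, a i ≤ ∑ i ∈ Ioi k, a i :=
          sum_le_sum_upSet hamono (Ioi k) hD_Ioi _ _ rfl hcardA'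
        have h4 : ∑ i ∈ Ioi k, a i ≤ ∑ i ∈ Ioi k, c i :=
          Finset.sum_le_sum fun i hi =>
            hac i (le_of_lt (lt_trans hkP (mem_Ioi.mp hi)))
        have hBcard : #(insert P (Ioi k)) = #(Ici k) := by
          rw [Finset.card_insert_of_notMem hPIoi, Fin.card_Ici, Fin.card_Ioi]
          omega
        have h7 : ∑ i ∈ insert P (Ioi k), fv i = fv P + ∑ i ∈ Ioi k, c i := by
          rw [Finset.sum_insert hPIoi]
          congr 1
          exact Finset.sum_congr rfl fun i hi =>
            hfvne i (ne_of_gt (lt_trans hkP (mem_Ioi.mp hi)))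
        have h8 := sum_le_tail_sortVec fv k (insert P (Ioi k)) hBcard
        linarith
    · -- z ∉ A
      have hAa : ∑ i ∈ A, fu i = ∑ i ∈ A, a i :=
        Finset.sum_congr rfl fun i hi => hza i (fun h => h0 (h ▸ hi))
      rw [hAa]
      have h3 : ∑ i ∈ A, a i ≤ ∑ i ∈ Ici k, a i :=
        sum_le_sum_upSet hamono (Ici k) hD_Ici _ A rfl hAcard
      linarith
  · -- pointwise part
    intro ℓ hPℓ
    rw [sortVec_le_iff]
    set t := sortVec fv ℓ with ht
    have hn : (ℓ:ℕ) + 1 ≤ #(univ.filter fun i => fv i ≤ t) :=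
      (sortVec_le_iff fv ℓ t).mp le_rfl
    have hcℓ : c ℓ ≤ t := by
      have hsub : (univ.filter fun i => fv i ≤ t) ⊆ (univ.filter fun i => c i ≤ t) := by
        intro i hi
        simp only [mem_filter, mem_univ, true_and] at *
        exact le_trans (hcfv i) hi
      have hcard := le_trans hn (card_le_card hsub)
      by_contra hcon
      push_neg at hcon
      have hsub2 : (univ.filter fun i => c i ≤ t) ⊆ Iio ℓ := by
        intro i hi
        simp only [mem_filter, mem_univ, true_and] at hi
        rw [mem_Iio]
        by_contra hle
        push_neg at hle
        exact absurd (le_trans (hcmono hle) hi) (not_le.mpr hcon)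
      have := card_le_card hsub2
      rw [Fin.card_Iio] at this
      omega
    have haℓt : ∀ i, i ≤ ℓ → i ≠ z → fu i ≤ t := by
      intro i hil hiz
      rw [hza i hiz]
      exact le_trans (hamono hil) (le_trans (hac ℓ hPℓ) hcℓ)
    by_cases hbt : fu z ≤ t
    · have hsub : Iic ℓ ⊆ univ.filter fun i => fu i ≤ t := by
        intro i hi
        simp only [mem_filter, mem_univ, true_and]
        by_cases hiz : i = z
        · rw [hiz]; exact hbt
        · exact haℓt i (mem_Iic.mp hi) hiz
      have := card_le_card hsub
      rw [Fin.card_Iic] at this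
      omega
    · have hdP : ¬ fv P ≤ t := fun h => hbt (le_trans hbd h)
      have hex : ∃ i₀, fv i₀ ≤ t ∧ ℓ < i₀ := by
        by_contra hcon
        push_neg at hcon
        have hsub : (univ.filter fun i => fv i ≤ t) ⊆ (Iic ℓ).erase P := by
          intro i hi
          simp only [mem_filter, mem_univ, true_and] at hi
          rw [Finset.mem_erase, mem_Iic]
          exact ⟨fun h => hdP (h ▸ hi), hcon i hi⟩
        have := card_le_card hsub
        rw [Finset.card_erase_of_mem (mem_Iic.mpr hPℓ), Fin.card_Iic] at this
        omega
      obtain ⟨i₀, hi₀t, hℓi₀⟩ := hex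
      have hi₀P : i₀ ≠ P := ne_of_gt (lt_of_le_of_lt hPℓ hℓi₀)
      have hi₀z : i₀ ≠ z := ne_of_gt (lt_of_le_of_lt (le_trans (hzb P) hPℓ) hℓi₀)
      have hfui₀ : fu i₀ ≤ t := by
        rw [hza i₀ hi₀z]
        calc a i₀ ≤ c i₀ := hac i₀ (le_trans hPℓ (le_of_lt hℓi₀))
          _ = fv i₀ := (hfvne i₀ hi₀P).symm
          _ ≤ t := hi₀t
      have hzIic : z ∈ Iic ℓ := mem_Iic.mpr (hzb ℓ)
      have hi₀notmem : i₀ ∉ (Iic ℓ).erase z := fun h =>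
        absurd (mem_Iic.mp (Finset.mem_of_mem_erase h)) (not_le.mpr hℓi₀)
      have hsub : insert i₀ ((Iic ℓ).erase z) ⊆ univ.filter fun i => fu i ≤ t := by
        intro i hi
        simp only [mem_filter, mem_univ, true_and]
        rcases Finset.mem_insert.mp hi with h | h
        · rw [h]; exact hfui₀
        · exact haℓt i (mem_Iic.mp (Finset.mem_of_mem_erase h)) (Finset.ne_of_mem_erase h)
      have hcards := card_le_card hsub
      rw [Finset.card_insert_of_notMem hi₀notmem,
        Finset.card_erase_of_mem hzIic, Fin.card_Iic] at hcards
      omega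

/-- if `u ≺_P v` then `G(u) ≺_P G̃^P(v)`. -/
theorem precP_G_GP {S : ℕ} (hS : 0 < S) (P : Fin S) (σ ξ : ℝ)
    (hσ : 0 ≤ σ) (hξ : 0 ≤ ξ)
    (u v : Fin S → ℝ)
    (hu : Monotone u) (hv : Monotone v)
    (hu0 : ∀ i, 0 ≤ u i) (hv0 : ∀ i, 0 ≤ v i)
    (huv : precP P u v) :
    precP P (GP σ ξ ⟨0, hS⟩ u) (GP σ ξ P v) := by
  obtain ⟨hstar, hpt⟩ := huv
  have hzb : ∀ i : Fin S, (⟨0, hS⟩ : Fin S) ≤ i := fun i => Fin.le_def.mpr (Nat.zero_le _)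
  obtain ⟨h1, h2⟩ := aux_main ⟨0, hS⟩ P hzb σ ξ hσ u v hu hv hstar hpt
  exact ⟨fun k => h1 k, fun ℓ h => h2 ℓ h⟩
end

section
/- Let 1 ≤ N ≤ S be integers and let (σ_n)_{n∈ℕ} and (ξ_n)_{n∈ℕ} be sequences of nonnegative real numbers. Define V^S_0 = 0 ∈ ℝ^S, V^N_0 = 0 ∈ ℝ^N, and for all n ∈ ℕ the Kiefer–Wolfowitz recursions V^S_{n+1} = sort([V^S_n + σ_n·e₁ − ξ_n·1_S]⁺) and V^N_{n+1} = sort([V^N_n + σ_n·e₁ − ξ_n·1_N]⁺). Then for every n ∈ ℕ: (i) V^S_n(S−N+ℓ) ≤ V^N_n(ℓ) for all ℓ ∈ {1,...,N}, and (ii) Σ_{i=1}^S V^S_n(i) ≤ Σ_{i=1}^N V^N_n(i). In particular the system with S servers started empty, fed by the same arrivals and services as the system with N servers started empty, has at every step a smaller total workload and smaller ordered workloads. -/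
open Finset

lemma sortVec_monotone {S : ℕ} (u : Fin S → ℝ) : Monotone (sortVec u) :=
  Tuple.monotone_sort u

lemma sortVec_nonneg {S : ℕ} {u : Fin S → ℝ} (hu : ∀ i, 0 ≤ u i) (i : Fin S) :
    0 ≤ sortVec u i := hu _

/-- uniqueness of monotone rearrangement -/
lemma sortVec_eq_of_monotone {S : ℕ} {u g : Fin S → ℝ} (π : Equiv.Perm (Fin S))
    (h : u = g ∘ π) (hg : Monotone g) : sortVec u = g := by
  have h2 : u ∘ π.symm = g := by
    ext i; simp [h]
  have h3 := (Tuple.comp_sort_eq_comp_iff_monotone (f := u) (σ := π.symm)).2 (by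
    rw [h2]; exact hg)
  rw [← h2, h3]
  rfl

/-- sum over a tail of sortVec is a sum of u over a mapped set -/
lemma sortVec_sum_Ici {S : ℕ} (u : Fin S → ℝ) (k : Fin S) :
    ∑ i ∈ Ici k, sortVec u i = ∑ i ∈ (Ici k).map (Tuple.sort u).toEmbedding, u i := by
  rw [Finset.sum_map]; rfl

/-- R1: counting upper bound for sortVec -/
lemma sortVec_le_of_card {S : ℕ} (u : Fin S → ℝ) (c : ℝ) (ℓ : Fin S)
    (h : (ℓ : ℕ) + 1 ≤ (univ.filter fun i => u i ≤ c).card) : sortVec u ℓ ≤ c := by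
  by_contra hc
  push_neg at hc
  set π := Tuple.sort u with hπ
  have hsub : (univ.filter fun i => u i ≤ c).map π.symm.toEmbedding ⊆ Iio ℓ := by
    intro j hj
    simp only [Finset.mem_map, Finset.mem_filter, Finset.mem_univ, true_and,
      Equiv.coe_toEmbedding] at hj
    obtain ⟨i, hi, rfl⟩ := hj
    simp only [Finset.mem_Iio]
    by_contra hlt
    push_neg at hlt
    have h1 : sortVec u ℓ ≤ sortVec u (π.symm i) := sortVec_monotone u hlt
    have h2 : sortVec u (π.symm i) = u i := by
      simp [sortVec, ← hπ]
    linarith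
  have := Finset.card_le_card hsub
  rw [Finset.card_map, Fin.card_Iio] at this
  omega

/-- R2: counting lower bound for sortVec -/
lemma le_sortVec_of_card {S : ℕ} (u : Fin S → ℝ) (c : ℝ) (ℓ : Fin S)
    (h : (univ.filter fun i => u i < c).card ≤ (ℓ : ℕ)) : c ≤ sortVec u ℓ := by
  by_contra hc
  push_neg at hc
  set π := Tuple.sort u with hπ
  have hsub : Iic ℓ ⊆ (univ.filter fun i => u i < c).map π.symm.toEmbedding := by
    intro j hj
    simp only [Finset.mem_Iic] at hj
    simp only [Finset.mem_map, Finset.mem_filter, Finset.mem_univ, true_and,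
      Equiv.coe_toEmbedding]
    refine ⟨π j, ?_, by simp⟩
    have h1 : sortVec u j ≤ sortVec u ℓ := sortVec_monotone u hj
    have h2 : sortVec u j = u (π j) := rfl
    linarith
  have := Finset.card_le_card hsub
  rw [Finset.card_map, Fin.card_Iic] at this
  omega

/-- top block of size t in Fin S -/
def topB (S t : ℕ) : Finset (Fin S) := univ.filter (fun i => S - t ≤ (i : ℕ))

lemma topB_eq_Ici {S t : ℕ} (h1 : 1 ≤ t) (h2 : t ≤ S) :
    topB S t = Ici (⟨S - t, by omega⟩ : Fin S) := by
  ext i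
  simp only [topB, Finset.mem_filter, Finset.mem_univ, true_and, Finset.mem_Ici, Fin.le_def]

lemma card_topB {S t : ℕ} (h2 : t ≤ S) : (topB S t).card = t := by
  rcases Nat.eq_zero_or_pos t with rfl | ht
  · have : topB S 0 = ∅ := by
      ext i; simp [topB]
    simp [this]
  · rw [topB_eq_Ici ht h2]
    rw [Fin.card_Ici]
    simp
    omega

lemma topB_succ {S t : ℕ} (h2 : t + 1 ≤ S) :
    topB S (t + 1) = insert (⟨S - (t+1), by omega⟩ : Fin S) (topB S t) := by
  ext i
  simp [topB, Fin.ext_iff]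
  omega

lemma topB_subset {S t t' : ℕ} (h : t ≤ t') : topB S t ⊆ topB S t' := by
  intro i hi; simp [topB] at *; omega

/-- L1 : sum over any C is at most sum over the top |C| block, for monotone g -/
lemma sum_le_topB {S : ℕ} {g : Fin S → ℝ} (hg : Monotone g) (C : Finset (Fin S)) :
    ∑ i ∈ C, g i ≤ ∑ i ∈ topB S C.card, g i := by
  suffices h : ∀ t, ∀ C : Finset (Fin S), C.card = t → ∑ i ∈ C, g i ≤ ∑ i ∈ topB S t, g i by
    exact h C.card C rfl
  intro t
  induction t with
  | zero =>
      intro C hn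
      rw [Finset.card_eq_zero] at hn
      subst hn
      have h0 : topB S 0 = ∅ := by
        ext i; simp [topB]
      simp [h0]
  | succ t ih =>
      intro C hn
      have hne : C.Nonempty := by
        rw [← Finset.card_pos, hn]; omega
      have hcS : t + 1 ≤ S := by
        rw [← hn]
        simpa using Finset.card_le_univ C
      set m := C.min' hne with hm
      have hmem : m ∈ C := C.min'_mem hne
      have hC' : (C.erase m).card = t := by
        rw [Finset.card_erase_of_mem hmem, hn]
        omega
      have hmle : (m : ℕ) ≤ S - (t + 1) := by
        by_contra hlt
        push_neg at hlt
        have : C ⊆ topB S t := by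
          intro i hi
          simp [topB]
          have := C.min'_le i hi
          rw [← hm] at this
          have := Fin.le_def.1 this
          omega
        have := Finset.card_le_card this
        rw [hn, card_topB (by omega)] at this
        omega
      have key : ∑ i ∈ C, g i = g m + ∑ i ∈ C.erase m, g i := by
        rw [Finset.add_sum_erase _ _ hmem]
      rw [key, topB_succ hcS, Finset.sum_insert (by simp [topB]; omega)]
      have h1 : g m ≤ g ⟨S - (t+1), by omega⟩ := hg (by simp [Fin.le_def]; omega)
      have h2 := ih (C.erase m) hC'
      linarith

/-- L2 : a sum over any small set is at most a tail of the sorted vector -/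
lemma sum_le_sortVec_tail {S : ℕ} {y : Fin S → ℝ} (hy : ∀ i, 0 ≤ y i)
    (B : Finset (Fin S)) (k : Fin S) (hB : B.card ≤ S - (k : ℕ)) :
    ∑ i ∈ B, y i ≤ ∑ i ∈ Ici k, sortVec y i := by
  set π := Tuple.sort y with hπ
  have h1 : ∑ i ∈ B, y i = ∑ j ∈ B.map π.symm.toEmbedding, (y ∘ π) j := by
    rw [Finset.sum_map]
    simp
  have hmono : Monotone (y ∘ π) := Tuple.monotone_sort y
  have h2 := sum_le_topB hmono (B.map π.symm.toEmbedding)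
  rw [Finset.card_map] at h2
  have h3 : ∑ i ∈ topB S B.card, (y ∘ π) i ≤ ∑ i ∈ topB S (S - (k:ℕ)), (y ∘ π) i := by
    apply Finset.sum_le_sum_of_subset_of_nonneg (topB_subset hB)
    intro i _ _
    exact hy _
  have hk1 : 1 ≤ S - (k : ℕ) := by have := k.isLt; omega
  have h4 : topB S (S - (k:ℕ)) = Ici (⟨S - (S - (k:ℕ)), by omega⟩ : Fin S) :=
    topB_eq_Ici hk1 (by omega)
  have hkk : (⟨S - (S - (k:ℕ)), by omega⟩ : Fin S) = k := by
    have := k.isLt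
    simp [Fin.ext_iff]
    omega
  rw [h4, hkk] at h3
  have h5 : ∑ i ∈ Ici k, (y ∘ π) i = ∑ i ∈ Ici k, sortVec y i := rfl
  linarith [h1, h2, h3]

lemma step_tail {S : ℕ} (hS : 0 < S) (σ ξ : ℝ) (hσ : 0 ≤ σ) (hξ : 0 ≤ ξ)
    (P : Fin S) (u v : Fin S → ℝ)
    (hu : Monotone u) (hv : Monotone v) (hu0 : ∀ i, 0 ≤ u i) (hv0 : ∀ i, 0 ≤ v i)
    (H1 : ∀ k : Fin S, ∑ i ∈ Ici k, u i ≤ ∑ i ∈ Ici k, v i)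
    (H2 : ∀ ℓ : Fin S, P ≤ ℓ → u ℓ ≤ v ℓ) :
    ∀ k : Fin S, ∑ i ∈ Ici k, GP σ ξ ⟨0, hS⟩ u i ≤ ∑ i ∈ Ici k, GP σ ξ P v i := by
  intro k
  set i0 : Fin S := ⟨0, hS⟩ with hi0
  set x : Fin S → ℝ := fun i => max (u i + (if i = i0 then σ else 0) - ξ) 0 with hx
  set y : Fin S → ℝ := fun i => max (v i + (if i = P then σ else 0) - ξ) 0 with hy
  have hx0 : ∀ i, 0 ≤ x i := fun i => le_max_right _ _
  have hy0 : ∀ i, 0 ≤ y i := fun i => le_max_right _ _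
  have hyv : ∀ i, v i - ξ ≤ y i := by
    intro i
    refine le_trans ?_ (le_max_left _ _)
    split <;> linarith
  -- H1' over top blocks
  have H1' : ∀ t, t ≤ S → ∑ i ∈ topB S t, u i ≤ ∑ i ∈ topB S t, v i := by
    intro t ht
    rcases Nat.eq_zero_or_pos t with rfl | ht1
    · have h0 : topB S 0 = ∅ := by ext i; simp [topB]
      simp [h0]
    · rw [topB_eq_Ici ht1 ht]
      exact H1 _
  show ∑ i ∈ Ici k, sortVec x i ≤ ∑ i ∈ Ici k, sortVec y i
  rw [sortVec_sum_Ici]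
  set A : Finset (Fin S) := (Ici k).map (Tuple.sort x).toEmbedding with hA
  have hAcard : A.card = S - (k : ℕ) := by
    rw [hA, Finset.card_map, Fin.card_Ici]
  set A' : Finset (Fin S) := A.filter (fun i => 0 < x i) with hA'
  have hsum : ∑ i ∈ A, x i = ∑ i ∈ A', x i := by
    rw [← Finset.sum_filter_add_sum_filter_not A (fun i => 0 < x i) x]
    have : ∑ i ∈ A.filter (fun i => ¬ 0 < x i), x i = 0 := by
      apply Finset.sum_eq_zero
      intro i hi
      simp only [Finset.mem_filter, not_lt] at hi
      exact le_antisymm hi.2 (hx0 i)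
    rw [this, add_zero]
  set m' := A'.card with hm'
  have hm'le : m' ≤ S - (k : ℕ) := by
    rw [hm', ← hAcard]
    exact Finset.card_le_card (Finset.filter_subset _ _)
  have hm'S : m' ≤ S := by
    have := k.isLt; omega
  have hval : ∀ i ∈ A', x i = u i + (if i = i0 then σ else 0) - ξ := by
    intro i hi
    simp only [hA', Finset.mem_filter] at hi
    rcases le_or_gt (u i + (if i = i0 then σ else 0) - ξ) 0 with h | h
    · exfalso
      have : x i = 0 := max_eq_right h
      rw [this] at hi
      exact lt_irrefl 0 hi.2
    · exact max_eq_left h.le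
  have hsum2 : ∑ i ∈ A', x i
      = ∑ i ∈ A', u i + (if i0 ∈ A' then σ else 0) - m' * ξ := by
    rw [Finset.sum_congr rfl hval]
    rw [Finset.sum_sub_distrib, Finset.sum_add_distrib]
    rw [Finset.sum_ite_eq' A' i0 (fun _ => σ)]
    simp [hm', mul_comm]
  rw [hsum, hsum2]
  rcases Nat.eq_zero_or_pos m' with hm0 | hm1
  · -- A' empty
    have hAe : A' = ∅ := Finset.card_eq_zero.1 hm0
    rw [hAe]
    simp
    have : (0:ℝ) ≤ ∑ i ∈ Ici k, sortVec y i :=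
      Finset.sum_nonneg (fun i _ => sortVec_nonneg hy0 i)
    have hmn : (0:ℝ) ≤ (m' : ℝ) * ξ := mul_nonneg (Nat.cast_nonneg _) hξ
    linarith
  by_cases hcase : i0 ∈ A' ∧ (P : ℕ) < S - m'
  · -- replacement case
    obtain ⟨hi0A, hPlt⟩ := hcase
    set A'' := A'.erase i0 with hA''
    have hA''card : A''.card = m' - 1 := by
      rw [hA'', Finset.card_erase_of_mem hi0A]
    have hsplit : ∑ i ∈ A', u i = u i0 + ∑ i ∈ A'', u i := by
      rw [hA'', Finset.add_sum_erase _ _ hi0A]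
    have h1 : ∑ i ∈ A'', u i ≤ ∑ i ∈ topB S (m'-1), u i := by
      have := sum_le_topB hu A''
      rwa [hA''card] at this
    have h2 : ∑ i ∈ topB S (m'-1), u i ≤ ∑ i ∈ topB S (m'-1), v i := H1' _ (by omega)
    have h3 : u i0 ≤ v P := le_trans (hu (show i0 ≤ P by rw [Fin.le_def]; exact Nat.zero_le _)) (H2 P le_rfl)
    have hPnot : P ∉ topB S (m'-1) := by
      simp only [topB, Finset.mem_filter, Finset.mem_univ, true_and, not_le]
      omega
    set B := insert P (topB S (m'-1)) with hB
    have hBcard : B.card = m' := by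
      rw [hB, Finset.card_insert_of_notMem hPnot, card_topB (by omega)]
      omega
    have h4 : ∑ i ∈ B, y i ≥ (v P + σ - ξ) + (∑ i ∈ topB S (m'-1), v i - (m'-1 : ℕ) * ξ) := by
      rw [hB, Finset.sum_insert hPnot]
      have hyP : v P + σ - ξ ≤ y P := by
        refine le_trans ?_ (le_max_left _ _)
        simp
      have : ∑ i ∈ topB S (m'-1), v i - (m'-1 : ℕ) * ξ ≤ ∑ i ∈ topB S (m'-1), y i := by
        have := Finset.sum_le_sum (fun i (_ : i ∈ topB S (m'-1)) => hyv i)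
        rw [Finset.sum_sub_distrib] at this
        simp only [Finset.sum_const, nsmul_eq_mul, card_topB (show m'-1 ≤ S by omega)] at this
        linarith
      linarith
    have h5 : ∑ i ∈ B, y i ≤ ∑ i ∈ Ici k, sortVec y i :=
      sum_le_sortVec_tail hy0 B k (by rw [hBcard]; exact hm'le)
    have hite : (if i0 ∈ A' then σ else 0) = σ := if_pos hi0A
    rw [hite, hsplit]
    have hcast : ((m' : ℝ)) = ((m'-1 : ℕ) : ℝ) + 1 := by
      have : m' - 1 + 1 = m' := by omega
      rw [← this]
      push_cast
      ring
    rw [hcast]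
    linarith
  · -- direct case : B = topB S m'
    have h1 : ∑ i ∈ A', u i ≤ ∑ i ∈ topB S m', u i := by
      have := sum_le_topB hu A'
      rwa [← hm'] at this
    have h2 : ∑ i ∈ topB S m', u i ≤ ∑ i ∈ topB S m', v i := H1' _ hm'S
    have hitele : (if i0 ∈ A' then σ else 0) ≤ (if P ∈ topB S m' then σ else 0) := by
      by_cases hP : i0 ∈ A'
      · have : (P : ℕ) ≥ S - m' := by
          by_contra hlt
          exact hcase ⟨hP, by omega⟩
        have hPin : P ∈ topB S m' := by
          simp only [topB, Finset.mem_filter, Finset.mem_univ, true_and]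
          omega
        rw [if_pos hP, if_pos hPin]
      · rw [if_neg hP]
        split <;> [exact hσ; exact le_rfl]
    have h4 : ∑ i ∈ topB S m', v i + (if P ∈ topB S m' then σ else 0) - m' * ξ
        ≤ ∑ i ∈ topB S m', y i := by
      have heq : ∑ i ∈ topB S m', (v i + (if i = P then σ else 0) - ξ)
          = ∑ i ∈ topB S m', v i + (if P ∈ topB S m' then σ else 0) - m' * ξ := by
        rw [Finset.sum_sub_distrib, Finset.sum_add_distrib,
          Finset.sum_ite_eq' (topB S m') P (fun _ => σ)]
        simp [card_topB hm'S, mul_comm]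
      rw [← heq]
      exact Finset.sum_le_sum (fun i _ => le_max_left _ _)
    have h5 : ∑ i ∈ topB S m', y i ≤ ∑ i ∈ Ici k, sortVec y i :=
      sum_le_sortVec_tail hy0 _ k (by rw [card_topB hm'S]; exact hm'le)
    linarith

lemma step_point {S : ℕ} (hS : 0 < S) (σ ξ : ℝ) (hσ : 0 ≤ σ) (hξ : 0 ≤ ξ)
    (P : Fin S) (u v : Fin S → ℝ)
    (hu : Monotone u) (hv : Monotone v)
    (H2 : ∀ ℓ : Fin S, P ≤ ℓ → u ℓ ≤ v ℓ) :
    ∀ ℓ : Fin S, P ≤ ℓ → GP σ ξ ⟨0, hS⟩ u ℓ ≤ GP σ ξ P v ℓ := by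
  intro ℓ hℓ
  set i0 : Fin S := ⟨0, hS⟩ with hi0
  set x : Fin S → ℝ := fun i => max (u i + (if i = i0 then σ else 0) - ξ) 0 with hx
  set y : Fin S → ℝ := fun i => max (v i + (if i = P then σ else 0) - ξ) 0 with hy
  show sortVec x ℓ ≤ sortVec y ℓ
  set w : ℝ := max (v P + σ - ξ) 0 with hw
  have hyP : y P = w := by simp [hy, hw]
  have hyne : ∀ j : Fin S, j ≠ P → y j = max (v j - ξ) 0 := by
    intro j hj; simp [hy, hj]
  have hxne : ∀ j : Fin S, j ≠ i0 → x j = max (u j - ξ) 0 := by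
    intro j hj; simp [hx, hj]
  have hxi0 : x i0 = max (u i0 + σ - ξ) 0 := by simp [hx]
  have hx0w : x i0 ≤ w := by
    rw [hxi0, hw]
    have h1 : u i0 ≤ v P := le_trans (hu (show i0 ≤ P by rw [Fin.le_def]; exact Nat.zero_le _)) (H2 P le_rfl)
    exact max_le_max (by linarith) le_rfl
  have hwzP : max (v P - ξ) 0 ≤ w := by
    rw [hw]; exact max_le_max (by linarith) le_rfl
  -- key pointwise bounds for x
  have hxle : ∀ i j : Fin S, i ≤ j → P ≤ j → i ≠ i0 → x i ≤ max (v j - ξ) 0 := by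
    intro i j hij hPj hi
    rw [hxne i hi]
    have : u i ≤ v j := le_trans (hu hij) (H2 j hPj)
    exact max_le_max (by linarith) le_rfl
  rcases lt_or_ge ((ℓ:ℕ) + 1) S with hlast | hlast
  · -- case ℓ + 1 < S
    set ℓ1 : Fin S := ⟨(ℓ:ℕ)+1, hlast⟩ with hℓ1
    set zℓ : ℝ := max (v ℓ - ξ) 0 with hzℓ
    set z1 : ℝ := max (v ℓ1 - ξ) 0 with hz1
    set c : ℝ := max zℓ (min z1 w) with hc
    have hR1 : sortVec x ℓ ≤ c := by
      apply sortVec_le_of_card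
      rcases le_total z1 w with hmin | hmin
      · -- witnesses : Icc 1 ℓ1
        have hone : 0 < S := hS
        have hsub : Finset.Icc (⟨1, by omega⟩ : Fin S) ℓ1 ⊆ univ.filter fun i => x i ≤ c := by
          intro i hi
          simp only [Finset.mem_Icc, Fin.le_def] at hi
          simp only [Finset.mem_filter, Finset.mem_univ, true_and]
          have hine : i ≠ i0 := by
            intro h
            rw [h, hi0] at hi
            have h2 : (1:ℕ) ≤ 0 := by simpa using hi.1
            omega
          have hPℓ1 : P ≤ ℓ1 := le_trans hℓ (by simp [Fin.le_def, hℓ1])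
          have := hxle i ℓ1 (show i ≤ ℓ1 by rw [Fin.le_def]; omega) hPℓ1 hine
          calc x i ≤ z1 := this
            _ = min z1 w := (min_eq_left hmin).symm
            _ ≤ c := le_max_right _ _
        have := Finset.card_le_card hsub
        rw [Fin.card_Icc] at this
        simp [hℓ1] at this
        omega
      · -- witnesses : Iic ℓ
        have hsub : Finset.Iic ℓ ⊆ univ.filter fun i => x i ≤ c := by
          intro i hi
          simp only [Finset.mem_Iic] at hi
          simp only [Finset.mem_filter, Finset.mem_univ, true_and]
          by_cases hie : i = i0
          · rw [hie]
            calc x i0 ≤ w := hx0w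
              _ = min z1 w := (min_eq_right hmin).symm
              _ ≤ c := le_max_right _ _
          · calc x i ≤ zℓ := hxle i ℓ hi hℓ hie
              _ ≤ c := le_max_left _ _
        have := Finset.card_le_card hsub
        rw [Fin.card_Iic] at this
        omega
    have hR2 : c ≤ sortVec y ℓ := by
      apply le_sortVec_of_card
      set j0 : Fin S := if c ≤ w then P else ℓ with hj0
      have hj0le : j0 ≤ ℓ := by
        rw [hj0]; split
        · exact hℓ
        · exact le_rfl
      have hyj0 : c ≤ y j0 := by
        rw [hj0]
        split
        · rwa [hyP]
        · rename_i hcw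
          push_neg at hcw
          have hℓP : ℓ ≠ P := by
            intro h
            have : max (v P - ξ) 0 = zℓ := by rw [← h]
            have : w ≥ c := by
              rw [hc]
              apply max_le
              · rw [← this]; exact hwzP
              · exact min_le_right _ _
            linarith
          rw [hyne ℓ hℓP]
          have hcz : c = zℓ := by
            rcases max_choice zℓ (min z1 w) with h | h
            · exact hc.trans h
            · exfalso
              have : min z1 w ≤ w := min_le_right _ _
              rw [hc] at *
              linarith [h]
          rw [hcz]
      have hsub : (univ.filter fun i => y i < c) ⊆ (Finset.Iic ℓ).erase j0 := by
        intro j hj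
        simp only [Finset.mem_filter, Finset.mem_univ, true_and] at hj
        rw [Finset.mem_erase, Finset.mem_Iic]
        constructor
        · intro h; rw [h] at hj; linarith [hyj0]
        · -- j ≤ ℓ
          by_contra hgt
          push_neg at hgt
          have hjP : j ≠ P := by
            intro h
            rw [h] at hgt
            exact absurd hgt (not_lt.2 hℓ)
          rw [hyne j hjP] at hj
          have h1 : v ℓ1 ≤ v j := hv (by
            simp only [Fin.le_def, hℓ1]
            have := Fin.lt_def.1 hgt
            omega)
          have h2 : v ℓ ≤ v j := hv (le_of_lt hgt)
          have : c ≤ max (v j - ξ) 0 := by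
            rw [hc]
            apply max_le
            · exact max_le_max (by linarith) le_rfl
            · calc min z1 w ≤ z1 := min_le_left _ _
                _ ≤ max (v j - ξ) 0 := max_le_max (by linarith) le_rfl
          linarith
      have := Finset.card_le_card hsub
      rw [Finset.card_erase_of_mem (Finset.mem_Iic.2 hj0le), Fin.card_Iic] at this
      omega
    linarith
  · -- case ℓ is the last index
    set zℓ : ℝ := max (v ℓ - ξ) 0 with hzℓ
    set c : ℝ := max zℓ w with hc
    have hR1 : sortVec x ℓ ≤ c := by
      apply sortVec_le_of_card
      have hsub : (univ : Finset (Fin S)) ⊆ univ.filter fun i => x i ≤ c := by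
        intro i _
        simp only [Finset.mem_filter, Finset.mem_univ, true_and]
        by_cases hie : i = i0
        · rw [hie]; exact le_trans hx0w (le_max_right _ _)
        · have hiℓ : i ≤ ℓ := by
            rw [Fin.le_def]
            have := i.isLt; omega
          exact le_trans (hxle i ℓ hiℓ hℓ hie) (le_max_left _ _)
      have h9 := Finset.card_le_card hsub
      rw [Finset.card_univ, Fintype.card_fin] at h9
      have := ℓ.isLt
      omega
    have hR2 : c ≤ sortVec y ℓ := by
      apply le_sortVec_of_card
      set j0 : Fin S := if c ≤ w then P else ℓ with hj0
      have hyj0 : c ≤ y j0 := by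
        rw [hj0]
        split
        · rwa [hyP]
        · rename_i hcw
          push_neg at hcw
          have hℓP : ℓ ≠ P := by
            intro h
            have hzz : max (v P - ξ) 0 = zℓ := by rw [← h]
            have : w ≥ c := by
              rw [hc]
              exact max_le (hzz ▸ hwzP) le_rfl
            linarith
          rw [hyne ℓ hℓP]
          have hcz : c = zℓ := by
            rcases max_choice zℓ w with h | h
            · exact hc.trans h
            · exfalso; rw [hc] at *; linarith [h]
          rw [hcz]
      have hsub : (univ.filter fun i => y i < c) ⊆ univ.erase j0 := by
        intro j hj
        simp only [Finset.mem_filter, Finset.mem_univ, true_and] at hj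
        rw [Finset.mem_erase]
        refine ⟨?_, Finset.mem_univ _⟩
        intro h; rw [h] at hj; linarith [hyj0]
      have h9 := Finset.card_le_card hsub
      rw [Finset.card_erase_of_mem (Finset.mem_univ _), Finset.card_univ,
        Fintype.card_fin] at h9
      have := ℓ.isLt
      omega
    linarith

/-- padding an `N`-vector with `S - N` zeros below -/
def padF {N S : ℕ} (hNS : N ≤ S) (v : Fin N → ℝ) : Fin S → ℝ :=
  fun i => if h : (i : ℕ) < S - N then 0 else v ⟨(i : ℕ) - (S - N), by
    have := i.isLt; omega⟩

lemma padF_lt {N S : ℕ} (hNS : N ≤ S) (v : Fin N → ℝ) (i : Fin S)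
    (h : (i : ℕ) < S - N) : padF hNS v i = 0 := dif_pos h

lemma padF_ge {N S : ℕ} (hNS : N ≤ S) (v : Fin N → ℝ) (i : Fin S)
    (h : ¬ ((i : ℕ) < S - N)) : padF hNS v i = v ⟨(i : ℕ) - (S - N), by
      have := i.isLt; omega⟩ := dif_neg h

lemma padF_monotone {N S : ℕ} (hNS : N ≤ S) {v : Fin N → ℝ}
    (hv : Monotone v) (hv0 : ∀ j, 0 ≤ v j) : Monotone (padF hNS v) := by
  intro i i' hii
  by_cases h : (i : ℕ) < S - N
  · rw [padF_lt hNS v i h]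
    by_cases h' : (i' : ℕ) < S - N
    · rw [padF_lt hNS v i' h']
    · rw [padF_ge hNS v i' h']
      exact hv0 _
  · have h' : ¬ ((i' : ℕ) < S - N) := by
      have := Fin.le_def.1 hii; omega
    rw [padF_ge hNS v i h, padF_ge hNS v i' h']
    apply hv
    simp only [Fin.le_def]
    have := Fin.le_def.1 hii
    omega

lemma padF_nonneg {N S : ℕ} (hNS : N ≤ S) {v : Fin N → ℝ}
    (hv0 : ∀ j, 0 ≤ v j) (i : Fin S) : 0 ≤ padF hNS v i := by
  by_cases h : (i : ℕ) < S - N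
  · rw [padF_lt hNS v i h]
  · rw [padF_ge hNS v i h]; exact hv0 _

lemma padF_sum {N S : ℕ} (hNS : N ≤ S) (v : Fin N → ℝ) :
    ∑ i, padF hNS v i = ∑ j, v j := by
  rw [← Finset.sum_filter_add_sum_filter_not univ (fun i : Fin S => (i : ℕ) < S - N)]
  have h1 : ∑ i ∈ univ.filter (fun i : Fin S => (i : ℕ) < S - N), padF hNS v i = 0 :=
    Finset.sum_eq_zero (fun i hi => padF_lt hNS v i (by simpa using (Finset.mem_filter.1 hi).2))
  rw [h1, zero_add]
  refine Finset.sum_bij' (i := fun i hi => (⟨(i : ℕ) - (S - N), by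
        simp only [Finset.mem_filter, Finset.mem_univ, true_and, not_lt] at hi
        have := i.isLt; omega⟩ : Fin N))
    (j := fun j _ => (⟨S - N + (j : ℕ), by have := j.isLt; omega⟩ : Fin S))
    (fun i hi => Finset.mem_univ _) (fun j hj => by
        simp only [Finset.mem_filter, Finset.mem_univ, true_and, not_lt]
        omega)
    (fun i hi => by
        simp only [Finset.mem_filter, Finset.mem_univ, true_and, not_lt] at hi
        apply Fin.ext
        show S - N + ((i : ℕ) - (S - N)) = (i : ℕ)
        omega)
    (fun j hj => by
        apply Fin.ext
        show S - N + (j : ℕ) - (S - N) = (j : ℕ)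
        omega)
    (fun i hi => by
        simp only [Finset.mem_filter, Finset.mem_univ, true_and, not_lt] at hi
        rw [padF_ge hNS v i (by omega)])

/-- the permutation of `Fin S` acting as `ρ` on the top `N` block -/
def padMap {N S : ℕ} (hNS : N ≤ S) (ρ : Fin N → Fin N) (i : Fin S) : Fin S :=
  if h : (i : ℕ) < S - N then i
  else ⟨S - N + (ρ ⟨(i : ℕ) - (S - N), by have := i.isLt; omega⟩ : Fin N), by
    have := (ρ ⟨(i : ℕ) - (S - N), by have := i.isLt; omega⟩).isLt; omega⟩

lemma padMap_injective {N S : ℕ} (hNS : N ≤ S) (ρ : Fin N → Fin N)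
    (hρ : Function.Injective ρ) : Function.Injective (padMap hNS ρ) := by
  intro a b hab
  unfold padMap at hab
  by_cases h1 : (a : ℕ) < S - N
  · by_cases h2 : (b : ℕ) < S - N
    · rwa [dif_pos h1, dif_pos h2] at hab
    · rw [dif_pos h1, dif_neg h2] at hab
      have := congrArg Fin.val hab
      simp only [Fin.val_mk] at this
      omega
  · by_cases h2 : (b : ℕ) < S - N
    · rw [dif_neg h1, dif_pos h2] at hab
      have := congrArg Fin.val hab
      simp only [Fin.val_mk] at this
      omega
    · rw [dif_neg h1, dif_neg h2] at hab
      have hval := congrArg Fin.val hab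
      simp only [Fin.val_mk] at hval
      have hρval : (ρ ⟨(a : ℕ) - (S - N), by have := a.isLt; omega⟩ : Fin N)
          = ρ ⟨(b : ℕ) - (S - N), by have := b.isLt; omega⟩ := by
        apply Fin.ext
        omega
      have := hρ hρval
      have hv := congrArg Fin.val this
      simp only [Fin.val_mk] at hv
      apply Fin.ext
      omega

noncomputable def padPerm {N S : ℕ} (hNS : N ≤ S) (ρ : Equiv.Perm (Fin N)) :
    Equiv.Perm (Fin S) :=
  Equiv.ofBijective (padMap hNS ρ)
    (Finite.injective_iff_bijective.1 (padMap_injective hNS ρ ρ.injective))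

lemma padPerm_apply {N S : ℕ} (hNS : N ≤ S) (ρ : Equiv.Perm (Fin N)) (i : Fin S) :
    padPerm hNS ρ i = padMap hNS ρ i := rfl

lemma sortVec_padF {N S : ℕ} (hNS : N ≤ S) (w : Fin N → ℝ) (hw : ∀ j, 0 ≤ w j) :
    sortVec (padF hNS w) = padF hNS (sortVec w) := by
  apply sortVec_eq_of_monotone (padPerm hNS (Tuple.sort w).symm)
  · ext i
    simp only [Function.comp_apply, padPerm_apply]
    unfold padMap
    by_cases h : (i : ℕ) < S - N
    · rw [dif_pos h, padF_lt hNS w i h, padF_lt hNS (sortVec w) i h]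
    · rw [dif_neg h, padF_ge hNS w i h]
      rw [padF_ge hNS (sortVec w) _ (by simp)]
      show w _ = sortVec w _
      have h3 : (⟨S - N + ((Tuple.sort w).symm ⟨(i : ℕ) - (S - N), by have := i.isLt; omega⟩ : Fin N)
          - (S - N), by have := ((Tuple.sort w).symm ⟨(i : ℕ) - (S - N), by have := i.isLt; omega⟩).isLt; omega⟩ : Fin N)
          = (Tuple.sort w).symm ⟨(i : ℕ) - (S - N), by have := i.isLt; omega⟩ := by
        apply Fin.ext; simp
      rw [h3]
      show w _ = w (Tuple.sort w ((Tuple.sort w).symm _))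
      rw [Equiv.apply_symm_apply]
  · apply padF_monotone hNS (Tuple.monotone_sort w)
    intro j
    exact hw _

lemma GP_padF {N S : ℕ} (hN : 0 < N) (hNS : N ≤ S) (σ ξ : ℝ) (hξ : 0 ≤ ξ)
    (v : Fin N → ℝ) (hv0 : ∀ j, 0 ≤ v j) :
    GP σ ξ (⟨S - N, by omega⟩ : Fin S) (padF hNS v) = padF hNS (GP σ ξ ⟨0, hN⟩ v) := by
  unfold GP
  have key : (fun i : Fin S => max (padF hNS v i + (if i = ⟨S - N, by omega⟩ then σ else 0) - ξ) 0)
      = padF hNS (fun j : Fin N => max (v j + (if j = ⟨0, hN⟩ then σ else 0) - ξ) 0) := by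
    ext i
    by_cases h : (i : ℕ) < S - N
    · rw [padF_lt hNS v i h, padF_lt hNS _ i h]
      have hne : i ≠ (⟨S - N, by omega⟩ : Fin S) := by
        intro he
        rw [he] at h
        simp at h
      rw [if_neg hne]
      simp
      linarith
    · rw [padF_ge hNS v i h, padF_ge hNS _ i h]
      have hiff : (i = (⟨S - N, by omega⟩ : Fin S)) ↔
          ((⟨(i : ℕ) - (S - N), by have := i.isLt; omega⟩ : Fin N) = ⟨0, hN⟩) := by
        rw [Fin.ext_iff, Fin.ext_iff]
        simp
        omega
      by_cases hi : i = (⟨S - N, by omega⟩ : Fin S)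
      · rw [if_pos hi, if_pos (hiff.1 hi)]
      · rw [if_neg hi, if_neg (fun hh => hi (hiff.2 hh))]
  rw [key]
  exact sortVec_padF hNS _ (fun j => le_max_right _ _)

lemma padF_apply_top {N S : ℕ} (hNS : N ≤ S) (v : Fin N → ℝ) (ℓ : Fin N)
    (hh : S - N + (ℓ : ℕ) < S) : padF hNS v (⟨S - N + (ℓ:ℕ), hh⟩ : Fin S) = v ℓ := by
  rw [padF_ge hNS v _ (by simp)]
  congr 1
  apply Fin.ext
  show S - N + (ℓ:ℕ) - (S - N) = (ℓ:ℕ)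
  omega

/-- comparison of the Kiefer–Wolfowitz recursions with `S` and `N ≤ S`
servers, both started empty: sorted workloads and total workload are smaller with `S`
servers. -/
theorem KW_compare_servers {N S : ℕ} (hN : 0 < N) (hNS : N ≤ S) (σ ξ : ℕ → ℝ)
    (hσ : ∀ n, 0 ≤ σ n) (hξ : ∀ n, 0 ≤ ξ n)
    (VS : ℕ → Fin S → ℝ) (VN : ℕ → Fin N → ℝ)
    (hVS0 : VS 0 = fun _ => 0) (hVN0 : VN 0 = fun _ => 0)
    (hVSrec : ∀ n, VS (n + 1) = GP (σ n) (ξ n) ⟨0, hN.trans_le hNS⟩ (VS n))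
    (hVNrec : ∀ n, VN (n + 1) = GP (σ n) (ξ n) ⟨0, hN⟩ (VN n)) :
    ∀ n, (∀ ℓ : Fin N,
        VS n ⟨S - N + (ℓ : ℕ), by have := ℓ.isLt; omega⟩ ≤ VN n ℓ) ∧
      (∑ i, VS n i ≤ ∑ i, VN n i) := by
  have hS : 0 < S := hN.trans_le hNS
  have key : ∀ n, Monotone (VS n) ∧ (∀ i, 0 ≤ VS n i) ∧ Monotone (VN n) ∧
      (∀ j, 0 ≤ VN n j) ∧
      (∀ k : Fin S, ∑ i ∈ Ici k, VS n i ≤ ∑ i ∈ Ici k, padF hNS (VN n) i) ∧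
      (∀ ℓ : Fin S, (⟨S - N, by omega⟩ : Fin S) ≤ ℓ → VS n ℓ ≤ padF hNS (VN n) ℓ) := by
    intro n
    induction n with
    | zero =>
      rw [hVS0, hVN0]
      have hpad : padF hNS (fun _ : Fin N => (0:ℝ)) = fun _ => 0 := by
        ext i
        by_cases h : (i:ℕ) < S - N
        · rw [padF_lt _ _ _ h]
        · rw [padF_ge _ _ _ h]
      rw [hpad]
      exact ⟨monotone_const, fun _ => le_rfl, monotone_const, fun _ => le_rfl,
        fun k => le_rfl, fun ℓ _ => le_rfl⟩
    | succ n ih =>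
      obtain ⟨hMu, hu0, hMv, hv0, H1, H2⟩ := ih
      have hpadrec : padF hNS (VN (n+1))
          = GP (σ n) (ξ n) (⟨S - N, by omega⟩ : Fin S) (padF hNS (VN n)) := by
        rw [hVNrec n]
        exact (GP_padF hN hNS _ _ (hξ n) _ hv0).symm
      refine ⟨?_, ?_, ?_, ?_, ?_, ?_⟩
      · rw [hVSrec n]; exact sortVec_monotone _
      · rw [hVSrec n]; exact fun i => sortVec_nonneg (fun _ => le_max_right _ _) i
      · rw [hVNrec n]; exact sortVec_monotone _
      · rw [hVNrec n]; exact fun j => sortVec_nonneg (fun _ => le_max_right _ _) j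
      · rw [hVSrec n, hpadrec]
        exact step_tail hS _ _ (hσ n) (hξ n) _ (VS n) (padF hNS (VN n)) hMu
          (padF_monotone hNS hMv hv0) hu0 (padF_nonneg hNS hv0) H1 H2
      · rw [hVSrec n, hpadrec]
        exact step_point hS _ _ (hσ n) (hξ n) _ (VS n) (padF hNS (VN n)) hMu
          (padF_monotone hNS hMv hv0) H2
  intro n
  obtain ⟨hMu, hu0, hMv, hv0, H1, H2⟩ := key n
  constructor
  · intro ℓ
    have h3 := H2 ⟨S - N + (ℓ:ℕ), by have := ℓ.isLt; omega⟩
      (by rw [Fin.le_def]; exact Nat.le_add_right _ _)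
    rwa [padF_apply_top hNS (VN n) ℓ (by have := ℓ.isLt; omega)] at h3
  · have hIci : Finset.Ici (⟨0, hS⟩ : Fin S) = univ :=
      Finset.eq_univ_iff_forall.2 (fun i => by
        simp only [Finset.mem_Ici, Fin.le_def]
        exact Nat.zero_le _)
    have h5 := H1 ⟨0, hS⟩
    rw [hIci, padF_sum hNS (VN n)] at h5
    exact h5
end

section
/- Let S ≥ 1, σ ≥ 0, ξ ≥ 0, and let u ∈ (ℝ⁺)^S be a nondecreasingly sorted vector. Then for every k ∈ {1,...,S}, Σ_{i=k}^S G(u)(i) = Σ_{i=k+1}^S [u(i) − ξ]⁺ + [max(u(1)+σ, u(k)) − ξ]⁺, where G(u) = sort([u + σ·e₁ − ξ·1]⁺). -/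
open Finset

/-- sortVec of a permuted monotone vector is the vector itself. -/
lemma sortVec_comp_perm {S : ℕ} (w : Fin S → ℝ) (hw : Monotone w)
    (π : Equiv.Perm (Fin S)) : sortVec (w ∘ π) = w := by
  unfold sortVec
  rw [Tuple.comp_perm_comp_sort_eq_comp_sort, Tuple.sort_eq_refl_iff_monotone.mpr hw]
  rfl

lemma max_max_sub_zero (x y z : ℝ) :
    max (max x y - z) 0 = max (max (x - z) 0) (max (y - z) 0) := by
  rcases le_total x y with h | h
  · rw [max_eq_right h, max_eq_right (max_le_max (sub_le_sub_right h z) le_rfl)]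
  · rw [max_eq_left h, max_eq_left (max_le_max (sub_le_sub_right h z) le_rfl)]

/-- tail sums of the Kiefer–Wolfowitz image `G(u)`. -/
theorem tailSum_G {S : ℕ} (hS : 0 < S) (σ ξ : ℝ)
    (hσ : 0 ≤ σ) (hξ : 0 ≤ ξ)
    (u : Fin S → ℝ) (hu : Monotone u) (hu0 : ∀ i, 0 ≤ u i) (k : Fin S) :
    ∑ i ∈ Finset.Ici k, GP σ ξ ⟨0, hS⟩ u i =
      (∑ i ∈ Finset.Ioi k, max (u i - ξ) 0) +
        max (max (u ⟨0, hS⟩ + σ) (u k) - ξ) 0 := by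
  obtain ⟨n, rfl⟩ : ∃ n, S = n + 1 := ⟨S - 1, by omega⟩
  set P : Fin (n + 1) := ⟨0, hS⟩ with hP
  set a : Fin (n + 1) → ℝ := fun i => max (u i - ξ) 0 with ha
  set c : ℝ := max (u P + σ - ξ) 0 with hc
  have ha_mono : Monotone a := fun i j h =>
    max_le_max (sub_le_sub_right (hu h) _) le_rfl
  have haP : a P ≤ c := max_le_max (by linarith) le_rfl
  set v : Fin (n + 1) → ℝ :=
    fun i => max (u i + (if i = P then σ else 0) - ξ) 0 with hv
  have hvP : v P = c := by simp [hv, hc]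
  have hvne : ∀ i, i ≠ P → v i = a i := by intro i h; simp [hv, ha, h]
  -- the pivot index p
  have hne : (Finset.univ.filter (fun i => a i ≤ c)).Nonempty :=
    ⟨P, by simp [haP]⟩
  set p : Fin (n + 1) := (Finset.univ.filter (fun i => a i ≤ c)).max' hne with hp
  have hpc : a p ≤ c := by
    have := Finset.max'_mem _ hne
    simpa using this
  have hgt : ∀ j, p < j → c < a j := by
    intro j hj
    by_contra h
    push_neg at h
    have : j ≤ p := Finset.le_max' _ j (by simpa using h)
    exact absurd hj (not_lt.mpr this)
  have hle : ∀ j, j ≤ p → a j ≤ c := fun j hj => (ha_mono hj).trans hpc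
  -- the sorted vector w
  set w : Fin (n + 1) → ℝ := v ∘ (p.cycleRange) with hw
  have hsucc_le : ∀ i : Fin (n + 1), i < p → ((i + 1 : Fin (n+1)) : ℕ) = (i : ℕ) + 1 := by
    intro i hi
    rw [Fin.lt_def] at hi
    have h2 : (i : ℕ) + 1 < n + 1 := by omega
    rw [Fin.val_add_one_of_lt]
    rw [Fin.lt_def]
    simp
    omega
  have hw_lt : ∀ i : Fin (n + 1), i < p → w i = a (i + 1) := by
    intro i hi
    have h1 : ((i + 1 : Fin (n + 1)) : ℕ) = (i : ℕ) + 1 := hsucc_le i hi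
    have hne1 : (i + 1 : Fin (n + 1)) ≠ P := by
      intro h
      rw [Fin.ext_iff] at h
      have h' : (i : ℕ) + 1 = 0 := by rw [← h1, h, hP]
      omega
    simp only [hw, Function.comp_apply, Fin.cycleRange_of_lt hi]
    exact hvne _ hne1
  have hw_p : w p = c := by
    simp only [hw, Function.comp_apply, Fin.cycleRange_self]
    have : (0 : Fin (n + 1)) = P := by rw [Fin.ext_iff]; simp [hP]
    rw [this, hvP]
  have hw_gt : ∀ i : Fin (n + 1), p < i → w i = a i := by
    intro i hi
    have hne1 : i ≠ P := by
      intro h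
      subst h
      exact absurd hi (by simp [hP, Fin.lt_def])
    simp only [hw, Function.comp_apply, Fin.cycleRange_of_gt hi]
    exact hvne _ hne1
  have hw_mono : Monotone w := by
    intro i j hij
    rcases lt_trichotomy i p with hi | hi | hi
    · rcases lt_trichotomy j p with hj | hj | hj
      · rw [hw_lt i hi, hw_lt j hj]
        apply ha_mono
        rw [Fin.le_def, hsucc_le i hi, hsucc_le j hj]
        rw [Fin.le_def] at hij; omega
      · subst hj
        rw [hw_lt i hi, hw_p]
        apply hle
        rw [Fin.le_def, hsucc_le i hi]
        rw [Fin.lt_def] at hi; omega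
      · rw [hw_lt i hi, hw_gt j hj]
        apply ha_mono
        rw [Fin.le_def, hsucc_le i hi]
        rw [Fin.lt_def] at hi hj; omega
    · subst hi
      rcases eq_or_lt_of_le hij with rfl | hj
      · exact le_rfl
      · rw [hw_p, hw_gt j hj]
        exact (hgt j hj).le
    · have hj : p < j := lt_of_lt_of_le hi hij
      rw [hw_gt i hi, hw_gt j hj]
      exact ha_mono hij
  -- identify GP with w
  have hGP : GP σ ξ P u = w := by
    have hveq : v = w ∘ ⇑(p.cycleRange⁻¹) := by
      funext i
      simp only [hw, Function.comp_apply, Equiv.Perm.inv_def, Equiv.apply_symm_apply]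
    show sortVec v = w
    rw [hveq]
    exact sortVec_comp_perm w hw_mono _
  -- rewrite the RHS
  have hRHS : max (max (u P + σ) (u k) - ξ) 0 = max c (a k) := by
    rw [max_max_sub_zero]
  rw [hGP, hRHS]
  -- two cases
  rcases le_or_gt k p with hkp | hkp
  · -- k ≤ p : tail sum picks up c
    have hmax : max c (a k) = c := max_eq_left (hle k hkp)
    rw [hmax]
    have hsplit : Finset.Ici k = Finset.Ico k p ∪ Finset.Ici p := by
      ext x
      simp only [Finset.mem_Ici, Finset.mem_union, Finset.mem_Ico,
        Fin.le_def, Fin.lt_def]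
      simp only [Fin.le_def] at hkp
      omega
    have hdisj : Disjoint (Finset.Ico k p) (Finset.Ici p) := by
      rw [Finset.disjoint_left]
      intro x hx hx'
      simp only [Finset.mem_Ico] at hx
      simp only [Finset.mem_Ici] at hx'
      exact absurd hx' (not_le.mpr hx.2)
    rw [hsplit, Finset.sum_union hdisj]
    have hIci_p : Finset.Ici p = insert p (Finset.Ioi p) := (Finset.Ioi_insert p).symm
    rw [hIci_p, Finset.sum_insert (by simp)]
    rw [hw_p]
    have h1 : ∑ i ∈ Finset.Ioi p, w i = ∑ i ∈ Finset.Ioi p, a i :=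
      Finset.sum_congr rfl fun i hi => hw_gt i (Finset.mem_Ioi.mp hi)
    have h2 : ∑ i ∈ Finset.Ico k p, w i = ∑ i ∈ Finset.Ioc k p, a i := by
      rw [Finset.sum_congr rfl fun i hi => hw_lt i (Finset.mem_Ico.mp hi).2]
      apply Finset.sum_nbij' (fun i => i + 1) (fun j => j - 1)
      · intro i hi
        simp only [Finset.mem_Ico] at hi
        have := hsucc_le i hi.2
        simp only [Finset.mem_Ioc]
        rw [Fin.lt_def, Fin.le_def, this]
        rw [Fin.le_def] at hi
        rw [Fin.lt_def] at hi
        omega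
      · intro j hj
        simp only [Finset.mem_Ioc] at hj
        have hj0 : (j : ℕ) ≠ 0 := by
          rw [Fin.lt_def] at hj
          omega
        have hsub : ((j - 1 : Fin (n + 1)) : ℕ) = (j : ℕ) - 1 := by
          rw [Fin.coe_sub_one, if_neg]
          intro h
          rw [Fin.ext_iff] at h
          simp only [Fin.val_zero] at h
          omega
        simp only [Finset.mem_Ico]
        rw [Fin.le_def, Fin.lt_def, hsub]
        rw [Fin.lt_def, Fin.le_def] at hj
        omega
      · intro i hi
        simp only [Finset.mem_Ico] at hi
        have h1 := hsucc_le i hi.2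
        have hne0 : (i + 1 : Fin (n + 1)) ≠ 0 := by
          intro h
          rw [Fin.ext_iff] at h
          simp only [Fin.val_zero] at h
          omega
        rw [Fin.ext_iff, Fin.coe_sub_one, if_neg hne0, h1]
        omega
      · intro j hj
        simp only [Finset.mem_Ioc] at hj
        have hj0 : 0 < (j : ℕ) := by rw [Fin.lt_def] at hj; omega
        have hsub : ((j - 1 : Fin (n + 1)) : ℕ) = (j : ℕ) - 1 := by
          rw [Fin.coe_sub_one, if_neg]
          intro h
          rw [Fin.ext_iff] at h
          simp only [Fin.val_zero] at h
          omega
        have hlt : (j - 1 : Fin (n + 1)) < p := by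
          rw [Fin.lt_def, hsub]
          rw [Fin.le_def] at hj
          omega
        rw [Fin.ext_iff, hsucc_le _ hlt, hsub]
        omega
      · intro i _; rfl
    rw [h1, h2]
    have h3 : ∑ i ∈ Finset.Ioc k p, a i + ∑ i ∈ Finset.Ioi p, a i
        = ∑ i ∈ Finset.Ioi k, a i := by
      rw [← Finset.sum_union]
      · congr 1
        ext x
        simp only [Finset.mem_union, Finset.mem_Ioc, Finset.mem_Ioi,
          Fin.le_def, Fin.lt_def]
        simp only [Fin.le_def] at hkp
        omega
      · rw [Finset.disjoint_left]
        intro x hx hx'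
        simp only [Finset.mem_Ioc] at hx
        simp only [Finset.mem_Ioi] at hx'
        exact absurd hx' (not_lt.mpr hx.2)
    ring_nf
    rw [add_comm (∑ i ∈ Finset.Ioc k p, a i)] at *
    linarith [h3]
  · -- p < k : tail sum is a k + ...
    have hmax : max c (a k) = a k := max_eq_right (hgt k hkp).le
    rw [hmax]
    have hIci_k : Finset.Ici k = insert k (Finset.Ioi k) := (Finset.Ioi_insert k).symm
    rw [hIci_k, Finset.sum_insert (by simp)]
    have hwk : w k = a k := hw_gt k hkp
    have h1 : ∑ i ∈ Finset.Ioi k, w i = ∑ i ∈ Finset.Ioi k, a i :=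
      Finset.sum_congr rfl fun i hi =>
        hw_gt i (lt_trans hkp (Finset.mem_Ioi.mp hi))
    rw [hwk, h1]
    ring
end
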